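/- For every real μ with γ < μ ≤ 0, the intertwining relation L(μ)·Â(μ) = (A − μI)·L(μ) holds, where Â(μ) = [[0, K(μ)^{1/2}M^{-1/2}], [−M^{-1/2}K(μ)^{1/2}, −M^{-1/2}(2μM + C)M^{-1/2}]], A = [[0, K^{1/2}M^{-1/2}], [−M^{-1/2}K^{1/2}, −M^{-1/2}CM^{-1/2}]] and L(μ) = [[K^{1/2}K(μ)^{-1/2}, 0], [μ M^{1/2}K(μ)^{-1/2}, I]]. -/

import Mathlib

open Matrix
open scoped ComplexOrder

noncomputable section

/-- The value `x* P x` (which is real for Hermitian `P`), taken as its real part. -/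
def qf {n : ℕ} (P : Matrix (Fin n) (Fin n) ℂ) (x : Fin n → ℂ) : ℝ :=
  (star x ⬝ᵥ P.mulVec x).re

/-- The (positive semidefinite) square root of a positive semidefinite matrix,
extended by `0` to all matrices. -/
def msqrt {n : ℕ} (P : Matrix (Fin n) (Fin n) ℂ) : Matrix (Fin n) (Fin n) ℂ :=
  open scoped Classical in
  if h : P.PosSemidef then
    (h.1.eigenvectorUnitary : Matrix (Fin n) (Fin n) ℂ) *
      diagonal ((↑) ∘ (Real.sqrt ·) ∘ h.1.eigenvalues) *
      (star h.1.eigenvectorUnitary : Matrix (Fin n) (Fin n) ℂ)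
  else 0

/-- The quadratic matrix pencil `K(λ) = λ²M + λC + K`. -/
def Kpen {n : ℕ} (M C K : Matrix (Fin n) (Fin n) ℂ) (lam : ℂ) :
    Matrix (Fin n) (Fin n) ℂ :=
  lam ^ 2 • M + lam • C + K

/-- The real part of the `+`-root of the scalar quadratic
`m(x) λ² + c(x) λ + k(x) = 0`. -/
def rfun {n : ℕ} (M C K : Matrix (Fin n) (Fin n) ℂ) (x : Fin n → ℂ) : ℝ :=
  open scoped Classical in
  if (qf C x) ^ 2 ≥ 4 * qf M x * qf K x then
    (-(qf C x) + Real.sqrt ((qf C x) ^ 2 - 4 * qf M x * qf K x)) / (2 * qf M x)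
  else
    -(qf C x) / (2 * qf M x)

/-- The spectral-shift bound `γ = sup_{x ≠ 0} Re p₊(x)`. -/
def gam {n : ℕ} (M C K : Matrix (Fin n) (Fin n) ℂ) : ℝ :=
  sSup {y : ℝ | ∃ x : Fin n → ℂ, x ≠ 0 ∧ rfun M C K x = y}

/-- The phase-space matrix `A = [[0, K½ M⁻½], [−M⁻½ K½, −M⁻½ C M⁻½]]`. -/
def phaseA {n : ℕ} (M C K : Matrix (Fin n) (Fin n) ℂ) :
    Matrix (Fin n ⊕ Fin n) (Fin n ⊕ Fin n) ℂ :=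
  fromBlocks 0 (msqrt K * (msqrt M)⁻¹)
    (-((msqrt M)⁻¹ * msqrt K)) (-((msqrt M)⁻¹ * C * (msqrt M)⁻¹))

/-- The operator norm of a matrix with respect to the Euclidean norm. -/
def opNorm {m : Type*} [Fintype m] [DecidableEq m] (A : Matrix m m ℂ) : ℝ :=
  ‖toEuclideanCLM (𝕜 := ℂ) A‖

/-- The block matrix `L(μ) = [[K½ K(μ)⁻½, 0], [μ M½ K(μ)⁻½, I]]`. -/
def Lmat {n : ℕ} (M C K : Matrix (Fin n) (Fin n) ℂ) (mu : ℝ) :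
    Matrix (Fin n ⊕ Fin n) (Fin n ⊕ Fin n) ℂ :=
  fromBlocks (msqrt K * (msqrt (Kpen M C K (mu : ℂ)))⁻¹) 0
    ((mu : ℂ) • (msqrt M * (msqrt (Kpen M C K (mu : ℂ)))⁻¹)) 1

lemma herm_qf {n : ℕ} {A : Matrix (Fin n) (Fin n) ℂ} (hA : A.IsHermitian) (x : Fin n → ℂ) :
    (star x ⬝ᵥ A.mulVec x) = ((qf A x : ℝ) : ℂ) := by
  have h : star (star x ⬝ᵥ A.mulVec x) = star x ⬝ᵥ A.mulVec x := by
    conv_lhs => rw [← star_dotProduct, star_mulVec, hA.eq, ← dotProduct_mulVec]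
  have him : (star x ⬝ᵥ A.mulVec x).im = 0 := by
    have := congrArg Complex.im h
    simp only [Complex.star_def, Complex.conj_im] at this
    linarith
  apply Complex.ext <;> simp [qf, him]

lemma msqrt_mul_self {n : ℕ} {P : Matrix (Fin n) (Fin n) ℂ} (hP : P.PosDef) :
    msqrt P * msqrt P = P := by
  rw [msqrt, dif_pos hP.posSemidef]
  set h := hP.posSemidef
  have hU : (star h.1.eigenvectorUnitary : Matrix (Fin n) (Fin n) ℂ) *
      (h.1.eigenvectorUnitary : Matrix (Fin n) (Fin n) ℂ) = 1 :=
    Unitary.star_mul_self_of_mem h.1.eigenvectorUnitary.2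
  have hD : diagonal (((↑) ∘ (Real.sqrt ·) ∘ h.1.eigenvalues : Fin n → ℂ)) *
      diagonal ((↑) ∘ (Real.sqrt ·) ∘ h.1.eigenvalues) =
      diagonal (RCLike.ofReal ∘ h.1.eigenvalues) := by
    rw [diagonal_mul_diagonal]
    congr 1
    funext i
    simp only [Function.comp_apply]
    rw [← Complex.ofReal_mul, Real.mul_self_sqrt (h.eigenvalues_nonneg i)]
    rfl
  conv_rhs => rw [h.1.spectral_theorem]
  rw [Unitary.conjStarAlgAut_apply]
  simp only [Matrix.mul_assoc]
  rw [← Matrix.mul_assoc (star _) _ (diagonal _ * _), hU, Matrix.one_mul,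
    ← Matrix.mul_assoc (diagonal _) (diagonal _), hD]

lemma msqrt_isUnit {n : ℕ} {P : Matrix (Fin n) (Fin n) ℂ} (hP : P.PosDef) :
    IsUnit (msqrt P).det := by
  have h : (msqrt P).det * (msqrt P).det = P.det := by
    rw [← det_mul, msqrt_mul_self hP]
  have hne : P.det ≠ 0 := hP.det_pos.ne'
  refine isUnit_iff_ne_zero.mpr fun h0 => hne ?_
  rw [← h, h0, mul_zero]

lemma quad_pos {m c k mu : ℝ} (hm : 0 < m) (_hc : 0 < c) (_hk : 0 < k)
    (hr : (if c ^ 2 ≥ 4 * m * k then (-c + Real.sqrt (c ^ 2 - 4 * m * k)) / (2 * m)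
           else -c / (2 * m)) < mu) :
    0 < mu ^ 2 * m + mu * c + k := by
  split_ifs at hr with h
  · have hd : 0 ≤ c ^ 2 - 4 * m * k := by linarith
    have hs := Real.sq_sqrt hd
    have hs0 := Real.sqrt_nonneg (c ^ 2 - 4 * m * k)
    rw [div_lt_iff₀ (by positivity)] at hr
    have hA : 0 < 2 * m * mu + c - Real.sqrt (c ^ 2 - 4 * m * k) := by nlinarith
    have hB : 0 < 2 * m * mu + c + Real.sqrt (c ^ 2 - 4 * m * k) := by nlinarith
    nlinarith [mul_pos hA hB]
  · push_neg at h
    rw [div_lt_iff₀ (by positivity)] at hr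
    nlinarith [sq_nonneg (2 * m * mu + c)]

lemma quad_neg_root {m c k : ℝ} (hm : 0 < m) (hc : 0 < c) (hk : 0 < k) :
    (if c ^ 2 ≥ 4 * m * k then (-c + Real.sqrt (c ^ 2 - 4 * m * k)) / (2 * m)
     else -c / (2 * m)) < 0 := by
  split_ifs with h
  · apply div_neg_of_neg_of_pos _ (by positivity)
    have : Real.sqrt (c ^ 2 - 4 * m * k) < c := (Real.sqrt_lt' hc).mpr (by nlinarith)
    linarith
  · exact div_neg_of_neg_of_pos (by linarith) (by positivity)

lemma rfun_neg {n : ℕ} {M C K : Matrix (Fin n) (Fin n) ℂ}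
    (hM : M.PosDef) (hC : C.PosDef) (hK : K.PosDef) {x : Fin n → ℂ} (hx : x ≠ 0) :
    rfun M C K x < 0 :=
  quad_neg_root (hM.re_dotProduct_pos hx) (hC.re_dotProduct_pos hx) (hK.re_dotProduct_pos hx)

lemma Kpen_posDef {n : ℕ} {M C K : Matrix (Fin n) (Fin n) ℂ}
    (hM : M.PosDef) (hC : C.PosDef) (hK : K.PosDef) {mu : ℝ}
    (hmu : gam M C K < mu) : (Kpen M C K (mu : ℂ)).PosDef := by
  rw [posDef_iff_dotProduct_mulVec]
  constructor
  · simp [Matrix.IsHermitian, Kpen, conjTranspose_add, conjTranspose_smul,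
      hM.1.eq, hC.1.eq, hK.1.eq, Complex.star_def, map_pow, Complex.conj_ofReal]
  · intro x hx
    have hbdd : BddAbove {y : ℝ | ∃ x : Fin n → ℂ, x ≠ 0 ∧ rfun M C K x = y} := by
      refine ⟨0, fun y hy => ?_⟩
      obtain ⟨z, hz, rfl⟩ := hy
      exact (rfun_neg hM hC hK hz).le
    have hrle : rfun M C K x ≤ gam M C K := le_csSup hbdd ⟨x, hx, rfl⟩
    have hrlt : rfun M C K x < mu := lt_of_le_of_lt hrle hmu
    have hq : 0 < mu ^ 2 * qf M x + mu * qf C x + qf K x :=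
      quad_pos (hM.re_dotProduct_pos hx) (hC.re_dotProduct_pos hx)
        (hK.re_dotProduct_pos hx) hrlt
    have expand : star x ⬝ᵥ (Kpen M C K (mu : ℂ)).mulVec x
        = ((mu ^ 2 * qf M x + mu * qf C x + qf K x : ℝ) : ℂ) := by
      have : star x ⬝ᵥ (Kpen M C K (mu : ℂ)).mulVec x
          = (mu : ℂ) ^ 2 * (star x ⬝ᵥ M.mulVec x) + (mu : ℂ) * (star x ⬝ᵥ C.mulVec x)
            + (star x ⬝ᵥ K.mulVec x) := by
        simp [Kpen, add_mulVec, smul_mulVec, dotProduct_add, dotProduct_smul,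
          smul_eq_mul, mul_add]
      rw [this, herm_qf hM.1, herm_qf hC.1, herm_qf hK.1]
      push_cast
      ring
    rw [expand]
    exact Complex.zero_lt_real.mpr hq

/-- The intertwining relation `L(μ) Â(μ) = (A − μI) L(μ)` for `γ < μ ≤ 0`,
where `Â(μ)` is the phase-space matrix of the shifted system. -/
theorem intertwining {n : ℕ} (hn : 1 ≤ n)
    (M C K : Matrix (Fin n) (Fin n) ℂ)
    (hM : M.PosDef) (hC : C.PosDef) (hK : K.PosDef) :
    ∀ mu : ℝ, gam M C K < mu → mu ≤ 0 →
      Lmat M C K mu *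
        fromBlocks 0 (msqrt (Kpen M C K (mu : ℂ)) * (msqrt M)⁻¹)
          (-((msqrt M)⁻¹ * msqrt (Kpen M C K (mu : ℂ))))
          (-((msqrt M)⁻¹ * (((2 * mu : ℝ) : ℂ) • M + C) * (msqrt M)⁻¹)) =
      (phaseA M C K - (mu : ℂ) • 1) * Lmat M C K mu := by
  intro mu hgam _hmu0
  have hpen : (Kpen M C K (mu : ℂ)).PosDef := Kpen_posDef hM hC hK hgam
  set a := msqrt M with ha_def
  set b := msqrt K with hb_def
  set s := msqrt (Kpen M C K (mu : ℂ)) with hs_def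
  have haa : a * a = M := msqrt_mul_self hM
  have hbb : b * b = K := msqrt_mul_self hK
  have hss : s * s = Kpen M C K (mu : ℂ) := msqrt_mul_self hpen
  have haU := msqrt_isUnit hM
  have hsU := msqrt_isUnit hpen
  have hai : a⁻¹ * a = 1 := nonsing_inv_mul _ haU
  have hai' : a * a⁻¹ = 1 := mul_nonsing_inv _ haU
  have hsi : s⁻¹ * s = 1 := nonsing_inv_mul _ hsU
  have hsi' : s * s⁻¹ = 1 := mul_nonsing_inv _ hsU
  -- helper cancellation lemmas
  have ca : ∀ X : Matrix (Fin n) (Fin n) ℂ, a⁻¹ * (a * X) = X := fun X => by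
    rw [← Matrix.mul_assoc, hai, Matrix.one_mul]
  have ca' : ∀ X : Matrix (Fin n) (Fin n) ℂ, a * (a⁻¹ * X) = X := fun X => by
    rw [← Matrix.mul_assoc, hai', Matrix.one_mul]
  have cs : ∀ X : Matrix (Fin n) (Fin n) ℂ, s⁻¹ * (s * X) = X := fun X => by
    rw [← Matrix.mul_assoc, hsi, Matrix.one_mul]
  have cs' : ∀ X : Matrix (Fin n) (Fin n) ℂ, s * (s⁻¹ * X) = X := fun X => by
    rw [← Matrix.mul_assoc, hsi', Matrix.one_mul]
  have haM : a⁻¹ * M = a := by rw [← haa, ← Matrix.mul_assoc, hai, Matrix.one_mul]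
  have hbK : b * (b * s⁻¹) = K * s⁻¹ := by rw [← Matrix.mul_assoc, hbb]
  have key : a⁻¹ * s = (mu : ℂ) ^ 2 • (a * s⁻¹) + (mu : ℂ) • (a⁻¹ * (C * s⁻¹))
      + a⁻¹ * (K * s⁻¹) := by
    have h1 : a⁻¹ * s = a⁻¹ * (Kpen M C K (mu : ℂ) * s⁻¹) := by
      conv_rhs => rw [← hss, Matrix.mul_assoc s s s⁻¹, hsi', Matrix.mul_one]
    rw [h1, Kpen, Matrix.add_mul, Matrix.add_mul, Matrix.smul_mul, Matrix.smul_mul,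
      Matrix.mul_add, Matrix.mul_add, Matrix.mul_smul, Matrix.mul_smul,
      ← Matrix.mul_assoc a⁻¹ M s⁻¹, haM]
  rw [Lmat, phaseA, fromBlocks_multiply,
    show (mu : ℂ) • (1 : Matrix (Fin n ⊕ Fin n) (Fin n ⊕ Fin n) ℂ)
      = fromBlocks ((mu : ℂ) • 1) 0 0 ((mu : ℂ) • 1) by
        rw [← fromBlocks_one, fromBlocks_smul]; simp,
    sub_eq_add_neg, fromBlocks_neg, fromBlocks_add, fromBlocks_multiply]
  simp only [← hs_def, ← ha_def, ← hb_def]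
  have hMa : M * a⁻¹ = a := by rw [← haa, Matrix.mul_assoc, hai', Matrix.mul_one]
  rw [fromBlocks_inj]
  refine ⟨?_, ?_, ?_, ?_⟩ <;>
    simp only [Matrix.zero_mul, Matrix.mul_zero, zero_add, add_zero, neg_zero,
      Matrix.neg_mul, Matrix.mul_smul, Matrix.smul_mul, Matrix.one_mul, Matrix.mul_one,
      Matrix.add_mul, Matrix.mul_add, Matrix.mul_assoc, ca, cs, hbK, hMa, hai, hai',
      hsi, hsi', smul_add]
  all_goals try module
  all_goals (rw [key]; module)


end
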